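/- arXiv:2403.05715 — 2 statements merged into one kernel-verified Lean document; each statement's English description precedes it below -/
import Mathlib

section
/- Under the trajectory distribution induced by any recommendation strategy g^ai, for every time t ≤ T and every history realization h_t of positive probability, the internal state and the system state are conditionally independent given the history: for all s ∈ 𝒮 and x ∈ 𝒳, P(S_t = s, X_t = x | H_t = h_t) = P(S_t = s | H_t = h_t) · P(X_t = x | H_t = h_t) = b_t^s(s) · b_t^x(x). -/
open scoped ENNReal

noncomputable section

namespace CPHS

variable {𝒳 𝒮 𝒴 𝒰 𝒲 𝒵 𝒩 : Type}

/-- i.i.d. product PMF on vectors of length `n`. -/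
def pmfVec {α : Type} (p : PMF α) : (n : ℕ) → PMF (Fin n → α)
  | 0 => PMF.pure Fin.elim0
  | n + 1 => (pmfVec p n).bind fun v => p.map fun a => Fin.snoc v a

/-- Safe getter for a vector of length `m + 1`. -/
def vget {α : Type} {m : ℕ} (v : Fin (m + 1) → α) (t : ℕ) : α :=
  v ⟨t % (m + 1), Nat.mod_lt _ (Nat.succ_pos m)⟩

/-- History at time `t`: observations `Y_{0:t}` and past actions `U^h_{0:t-1}`, `U^ai_{0:t-1}`. -/
def Hist (𝒴 𝒰 : Type) (t : ℕ) : Type :=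
  (Fin (t + 1) → 𝒴) × (Fin t → 𝒰) × (Fin t → 𝒰)

/-- Extension of a history by one step. -/
def Hist.ext {t : ℕ} (h : Hist 𝒴 𝒰 t) (y : 𝒴) (uh uai : 𝒰) : Hist 𝒴 𝒰 (t + 1) :=
  (Fin.snoc h.1 y, Fin.snoc h.2.1 uh, Fin.snoc h.2.2 uai)

/-- A recommendation strategy of the AI platform. -/
def Strat (𝒴 𝒰 : Type) : Type := (t : ℕ) → Hist 𝒴 𝒰 t → 𝒰

/-- The human–AI system model. -/
structure System (𝒳 𝒮 𝒴 𝒰 𝒲 𝒵 𝒩 : Type) where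
  T : ℕ
  pX0 : PMF 𝒳
  pS0 : PMF 𝒮
  pW : PMF 𝒲
  pZ : PMF 𝒵
  pN : PMF 𝒩
  f : 𝒳 → 𝒰 → 𝒲 → 𝒳
  o : 𝒳 → 𝒵 → 𝒴
  fh : 𝒮 → 𝒰 → 𝒴 → 𝒩 → 𝒮
  gh : 𝒮 → 𝒰 → 𝒰

namespace System

variable (M : System 𝒳 𝒮 𝒴 𝒰 𝒲 𝒵 𝒩)

/-- Primitive sample space: initial states and all noises. -/
abbrev Ω : Type :=
  𝒳 × 𝒮 × (Fin (M.T + 1) → 𝒲) × (Fin (M.T + 1) → 𝒵) × (Fin (M.T + 1) → 𝒩)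

/-- Joint PMF of the mutually independent primitive random variables. -/
def pΩ : PMF M.Ω :=
  M.pX0.bind fun x => M.pS0.bind fun s =>
    (pmfVec M.pW (M.T + 1)).bind fun w =>
      (pmfVec M.pZ (M.T + 1)).bind fun z =>
        (pmfVec M.pN (M.T + 1)).map fun n => (x, s, w, z, n)

/-- Trajectory `(X_t, S_t, H_t)` generated by strategy `g` from primitive randomness `ω`. -/
def traj (g : Strat 𝒴 𝒰) (ω : M.Ω) : (t : ℕ) → 𝒳 × 𝒮 × Hist 𝒴 𝒰 t
  | 0 => (ω.1, ω.2.1, (fun _ => M.o ω.1 (vget ω.2.2.2.1 0), Fin.elim0, Fin.elim0))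
  | t + 1 =>
      let p : 𝒳 × 𝒮 × Hist 𝒴 𝒰 t := traj g ω t
      let uai := g t p.2.2
      let uh := M.gh p.2.1 uai
      let x' := M.f p.1 uh (vget ω.2.2.1 t)
      let y' := M.o x' (vget ω.2.2.2.1 (t + 1))
      let s' := M.fh p.2.1 uai y' (vget ω.2.2.2.2 t)
      (x', s', Hist.ext p.2.2 y' uh uai)

/-- System state process. -/
def X (g : Strat 𝒴 𝒰) (ω : M.Ω) (t : ℕ) : 𝒳 := (M.traj g ω t).1
/-- Internal state process. -/
def S (g : Strat 𝒴 𝒰) (ω : M.Ω) (t : ℕ) : 𝒮 := (M.traj g ω t).2.1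
/-- History process. -/
def H (g : Strat 𝒴 𝒰) (ω : M.Ω) (t : ℕ) : Hist 𝒴 𝒰 t := (M.traj g ω t).2.2
/-- Observation process. -/
def Y (g : Strat 𝒴 𝒰) (ω : M.Ω) (t : ℕ) : 𝒴 := (M.H g ω t).1 (Fin.last t)
/-- AI recommendation process. -/
def Uai (g : Strat 𝒴 𝒰) (ω : M.Ω) (t : ℕ) : 𝒰 := g t (M.H g ω t)
/-- Human action process. -/
def Uh (g : Strat 𝒴 𝒰) (ω : M.Ω) (t : ℕ) : 𝒰 := M.gh (M.S g ω t) (M.Uai g ω t)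

/-- Probability of an event about the trajectory. -/
def pr (A : Set M.Ω) : ℝ := (M.pΩ.toOuterMeasure A).toReal

/-- Conditional probability `P(A | B)`. -/
def cpr (A B : Set M.Ω) : ℝ := M.pr (A ∩ B) / M.pr B

/-- Observation kernel `P(y | x')`. -/
def Po (y : 𝒴) (x' : 𝒳) : ℝ := (M.pZ.toOuterMeasure {z | M.o x' z = y}).toReal
/-- Transition kernel `P(x' | x, u)`. -/
def Pt (x' x : 𝒳) (u : 𝒰) : ℝ := (M.pW.toOuterMeasure {w | M.f x u w = x'}).toReal
/-- Internal-state kernel `P^h(s' | s, u, y)`. -/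
def Pn (s' s : 𝒮) (u : 𝒰) (y : 𝒴) : ℝ := (M.pN.toOuterMeasure {n | M.fh s u y n = s'}).toReal

/-- AI belief on the internal state, `b_t^s`. -/
def bS (g : Strat 𝒴 𝒰) {t : ℕ} (h : Hist 𝒴 𝒰 t) (s : 𝒮) : ℝ :=
  M.cpr {ω | M.S g ω t = s} {ω | M.H g ω t = h}

/-- AI belief on the system state, `b_t^x`. -/
def bX (g : Strat 𝒴 𝒰) {t : ℕ} (h : Hist 𝒴 𝒰 t) (x : 𝒳) : ℝ :=
  M.cpr {ω | M.X g ω t = x} {ω | M.H g ω t = h}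

/-- Conditional expectation `E[φ | B]`. -/
def cexp [Fintype 𝒳] [Fintype 𝒮] [Fintype 𝒲] [Fintype 𝒵] [Fintype 𝒩]
    (B : Set M.Ω) (φ : M.Ω → ℝ) : ℝ :=
  (∑ ω : M.Ω, Set.indicator B φ ω * (M.pΩ ω).toReal) / M.pr B

/-- Expected total discounted reward of a strategy. -/
def J [Fintype 𝒳] [Fintype 𝒮] [Fintype 𝒲] [Fintype 𝒵] [Fintype 𝒩]
    (g : Strat 𝒴 𝒰) (r : 𝒳 → 𝒰 → ℝ) (γ : ℝ) : ℝ :=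
  ∑ t ∈ Finset.range (M.T + 1), γ ^ t *
    ∑ ω : M.Ω, (M.pΩ ω).toReal * r (M.X g ω t) (M.Uh g ω t)


open Classical in
/-- The human's true conditional action distribution `P(U_t^h = u | h_t, u^ai)`. -/
def actDist [Fintype 𝒮] (g : Strat 𝒴 𝒰) {t : ℕ} (h : Hist 𝒴 𝒰 t) (uai u : 𝒰) : ℝ :=
  ∑ s, (if u = M.gh s uai then (1 : ℝ) else 0) * M.bS g h s

open Classical in
/-- One-step Bellman operator on histories, using the beliefs `b_t^s, b_t^x`. -/
def Qstep [Fintype 𝒳] [Fintype 𝒮] [Fintype 𝒴] [Fintype 𝒰]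
    (g : Strat 𝒴 𝒰) (r : 𝒳 → 𝒰 → ℝ) (γ : ℝ) {t : ℕ} (h : Hist 𝒴 𝒰 t) (u : 𝒰)
    (Vnext : Hist 𝒴 𝒰 (t + 1) → ℝ) : ℝ :=
  (∑ x, ∑ s, r x (M.gh s u) * M.bX g h x * M.bS g h s) +
    γ * ∑ y' : 𝒴, ∑ uh : 𝒰,
      (∑ s, (if uh = M.gh s u then (1 : ℝ) else 0) * M.bS g h s) *
        (∑ x', ∑ x, M.Po y' x' * M.Pt x' x uh * M.bX g h x) * Vnext (h.ext y' uh u)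

/-- Backward value recursion on histories; `n` is the number of remaining stages,
so that `V̄_t = Vbar (T + 1 - t) t` and `V̄_{T+1} ≡ 0`. -/
def Vbar [Fintype 𝒳] [Fintype 𝒮] [Fintype 𝒴] [Fintype 𝒰] [Nonempty 𝒰]
    (g : Strat 𝒴 𝒰) (r : 𝒳 → 𝒰 → ℝ) (γ : ℝ) : (n : ℕ) → (t : ℕ) → Hist 𝒴 𝒰 t → ℝ
  | 0, _, _ => 0
  | n + 1, t, h =>
      Finset.univ.sup' Finset.univ_nonempty fun u =>
        M.Qstep g r γ h u (Vbar g r γ n (t + 1))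

/-- `Q̄_t(h_t, u)`, defined through `V̄_{t+1}`. -/
def Qbar [Fintype 𝒳] [Fintype 𝒮] [Fintype 𝒴] [Fintype 𝒰] [Nonempty 𝒰]
    (g : Strat 𝒴 𝒰) (r : 𝒳 → 𝒰 → ℝ) (γ : ℝ) (t : ℕ) (h : Hist 𝒴 𝒰 t) (u : 𝒰) : ℝ :=
  M.Qstep g r γ h u (M.Vbar g r γ (M.T - t) (t + 1))

/-- `V̄_t(h_t) = max_u Q̄_t(h_t, u)`. -/
def VbarT [Fintype 𝒳] [Fintype 𝒮] [Fintype 𝒴] [Fintype 𝒰] [Nonempty 𝒰]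
    (g : Strat 𝒴 𝒰) (r : 𝒳 → 𝒰 → ℝ) (γ : ℝ) (t : ℕ) (h : Hist 𝒴 𝒰 t) : ℝ :=
  M.Vbar g r γ (M.T + 1 - t) t h

/-- Bayes-filter update `ψ^x` of the system-state belief. -/
def bayesX [Fintype 𝒳] (b : 𝒳 → ℝ) (uh : 𝒰) (y : 𝒴) : 𝒳 → ℝ := fun x' =>
  (∑ x, M.Po y x' * M.Pt x' x uh * b x) /
    (∑ x'', ∑ x, M.Po y x'' * M.Pt x'' x uh * b x)

/-- One-step Bellman operator of the approximate human model on `Sh × Δ(𝒳)`. -/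
def Qhatstep {Sh : Type} [Fintype 𝒳] [Fintype 𝒴] [Fintype 𝒰]
    (μhat : Sh → 𝒰 → PMF 𝒰) (ψhat : Sh → 𝒰 → 𝒴 → Sh) (r : 𝒳 → 𝒰 → ℝ) (γ : ℝ)
    (π : Sh × (𝒳 → ℝ)) (u : 𝒰) (Vnext : Sh × (𝒳 → ℝ) → ℝ) : ℝ :=
  (∑ x, ∑ uh, r x uh * π.2 x * (μhat π.1 u uh).toReal) +
    γ * ∑ y' : 𝒴, ∑ uh : 𝒰, (μhat π.1 u uh).toReal *
      (∑ x', ∑ x, M.Po y' x' * M.Pt x' x uh * π.2 x) *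
      Vnext (ψhat π.1 u y', M.bayesX π.2 uh y')

/-- Approximate value recursion; `n` is the number of remaining stages, so that
`V̂_t = Vhat (T + 1 - t)` and `V̂_{T+1} ≡ 0`. -/
def Vhat {Sh : Type} [Fintype 𝒳] [Fintype 𝒴] [Fintype 𝒰] [Nonempty 𝒰]
    (μhat : Sh → 𝒰 → PMF 𝒰) (ψhat : Sh → 𝒰 → 𝒴 → Sh) (r : 𝒳 → 𝒰 → ℝ) (γ : ℝ) :
    (n : ℕ) → Sh × (𝒳 → ℝ) → ℝ
  | 0, _ => 0
  | n + 1, π =>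
      Finset.univ.sup' Finset.univ_nonempty fun u =>
        M.Qhatstep μhat ψhat r γ π u (Vhat μhat ψhat r γ n)

/-- `Q̂_t(π̂, u)`, defined through `V̂_{t+1}`. -/
def Qhat {Sh : Type} [Fintype 𝒳] [Fintype 𝒴] [Fintype 𝒰] [Nonempty 𝒰]
    (μhat : Sh → 𝒰 → PMF 𝒰) (ψhat : Sh → 𝒰 → 𝒴 → Sh) (r : 𝒳 → 𝒰 → ℝ) (γ : ℝ)
    (t : ℕ) (π : Sh × (𝒳 → ℝ)) (u : 𝒰) : ℝ :=
  M.Qhatstep μhat ψhat r γ π u (M.Vhat μhat ψhat r γ (M.T - t))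

end System

/-- Total variation distance between two distributions on a finite type,
given as real-valued mass functions. -/
def tv {α : Type} [Fintype α] (p q : α → ℝ) : ℝ := (1 / 2) * ∑ a, |p a - q a|


section Aux

variable {𝒳 𝒮 𝒴 𝒰 𝒲 𝒵 𝒩 : Type}

/-- A function of the form `Fin (n+1) → α` equals a snoc iff components match. -/
lemma snoc_eq_iff' {n : ℕ} {α : Type} (v : Fin n → α) (a : α) (f : Fin (n + 1) → α) :
    Fin.snoc v a = f ↔ (v = fun i => f i.castSucc) ∧ a = f (Fin.last n) := by
  constructor
  · rintro rfl
    refine ⟨?_, ?_⟩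
    · funext i; simp
    · simp
  · rintro ⟨hv, ha⟩
    funext i
    refine Fin.lastCases ?_ ?_ i
    · simp [ha]
    · intro i; simp [hv]

/-- Prefix (first `t` steps) of a history of length `t+1`. -/
def Hist.prefix {t : ℕ} (h : Hist 𝒴 𝒰 (t + 1)) : Hist 𝒴 𝒰 t :=
  (fun i => h.1 i.castSucc, fun i => h.2.1 i.castSucc, fun i => h.2.2 i.castSucc)

lemma Hist.ext_eq_iff {t : ℕ} (p : Hist 𝒴 𝒰 t) (y : 𝒴) (uh uai : 𝒰)
    (h : Hist 𝒴 𝒰 (t + 1)) :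
    Hist.ext p y uh uai = h ↔
      p = Hist.prefix h ∧ y = h.1 (Fin.last (t + 1)) ∧
        uh = h.2.1 (Fin.last t) ∧ uai = h.2.2 (Fin.last t) := by
  unfold Hist at p h
  simp only [Hist.ext, Hist.prefix, Hist, Prod.ext_iff, snoc_eq_iff']
  tauto

namespace System

variable (M : System 𝒳 𝒮 𝒴 𝒰 𝒲 𝒵 𝒩)

lemma traj_succ (g : Strat 𝒴 𝒰) (ω : M.Ω) (t : ℕ) :
    M.traj g ω (t + 1) =
      (M.f (M.X g ω t) (M.gh (M.S g ω t) (g t (M.H g ω t))) (vget ω.2.2.1 t),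
       M.fh (M.S g ω t) (g t (M.H g ω t))
         (M.o (M.f (M.X g ω t) (M.gh (M.S g ω t) (g t (M.H g ω t))) (vget ω.2.2.1 t))
           (vget ω.2.2.2.1 (t + 1))) (vget ω.2.2.2.2 t),
       Hist.ext (M.H g ω t)
         (M.o (M.f (M.X g ω t) (M.gh (M.S g ω t) (g t (M.H g ω t))) (vget ω.2.2.1 t))
           (vget ω.2.2.2.1 (t + 1)))
         (M.gh (M.S g ω t) (g t (M.H g ω t))) (g t (M.H g ω t))) := rfl

open Classical in
/-- Marginal weight of an event depending on `(X₀, W, Z)`. -/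
noncomputable def PA (A : 𝒳 → (Fin (M.T + 1) → 𝒲) → (Fin (M.T + 1) → 𝒵) → Prop) : ℝ≥0∞ :=
  ∑' p : 𝒳 × (Fin (M.T + 1) → 𝒲) × (Fin (M.T + 1) → 𝒵),
    if A p.1 p.2.1 p.2.2 then
      M.pX0 p.1 * pmfVec M.pW (M.T + 1) p.2.1 * pmfVec M.pZ (M.T + 1) p.2.2 else 0

open Classical in
/-- Marginal weight of an event depending on `(S₀, N)`. -/
noncomputable def PB (B : 𝒮 → (Fin (M.T + 1) → 𝒩) → Prop) : ℝ≥0∞ :=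
  ∑' q : 𝒮 × (Fin (M.T + 1) → 𝒩),
    if B q.1 q.2 then M.pS0 q.1 * pmfVec M.pN (M.T + 1) q.2 else 0

lemma pr_fact
    (A : 𝒳 → (Fin (M.T + 1) → 𝒲) → (Fin (M.T + 1) → 𝒵) → Prop)
    (B : 𝒮 → (Fin (M.T + 1) → 𝒩) → Prop) :
    M.pΩ.toOuterMeasure {ω : M.Ω | A ω.1 ω.2.2.1 ω.2.2.2.1 ∧ B ω.2.1 ω.2.2.2.2}
      = M.PA A * M.PB B := by
  classical
  set pW' := pmfVec M.pW (M.T + 1) with hpW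
  set pZ' := pmfVec M.pZ (M.T + 1) with hpZ
  set pN' := pmfVec M.pN (M.T + 1) with hpN
  set NB : 𝒮 → ℝ≥0∞ := fun s0 => ∑' n0, if B s0 n0 then pN' n0 else 0 with hNB
  set C : 𝒳 → ℝ≥0∞ := fun x0 =>
    ∑' w0, pW' w0 * ∑' z0, (if A x0 w0 z0 then pZ' z0 else 0) with hCdef
  have hPB : M.PB B = ∑' s0, M.pS0 s0 * NB s0 := by
    rw [PB, ENNReal.tsum_prod']
    refine tsum_congr fun s0 => ?_
    rw [hNB, ← ENNReal.tsum_mul_left]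
    refine tsum_congr fun n0 => ?_
    split_ifs <;> simp [hpN]
  have hPA : M.PA A = ∑' x0, M.pX0 x0 * C x0 := by
    rw [PA, ENNReal.tsum_prod']
    refine tsum_congr fun x0 => ?_
    rw [hCdef, ← ENNReal.tsum_mul_left]
    simp only []
    rw [ENNReal.tsum_prod']
    refine tsum_congr fun w0 => ?_
    rw [← mul_assoc, ← ENNReal.tsum_mul_left]
    refine tsum_congr fun z0 => ?_
    split_ifs <;> simp [mul_comm, mul_assoc, mul_left_comm, hpW, hpZ]
  have hkey : ∀ (x0 : 𝒳) (s0 : 𝒮) (w0 : Fin (M.T + 1) → 𝒲) (z0 : Fin (M.T + 1) → 𝒵),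
      pN'.toOuterMeasure ((fun n0 => (x0, s0, w0, z0, n0)) ⁻¹'
          {ω : M.Ω | A ω.1 ω.2.2.1 ω.2.2.2.1 ∧ B ω.2.1 ω.2.2.2.2})
        = if A x0 w0 z0 then NB s0 else 0 := by
    intro x0 s0 w0 z0
    rw [PMF.toOuterMeasure_apply]
    by_cases hA : A x0 w0 z0
    · simp only [hA, if_true, hNB]
      refine tsum_congr fun n0 => ?_
      simp [Set.indicator_apply, Set.mem_preimage, Set.mem_setOf_eq, hA]
    · simp only [hA, if_false]
      refine ENNReal.tsum_eq_zero.2 fun n0 => ?_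
      simp [Set.indicator_apply, Set.mem_preimage, Set.mem_setOf_eq, hA]
  have hC : ∀ (x0 : 𝒳) (s0 : 𝒮),
      (∑' w0, pW' w0 * ∑' z0, pZ' z0 * (if A x0 w0 z0 then NB s0 else 0))
        = NB s0 * C x0 := by
    intro x0 s0
    have hz : ∀ w0, (∑' z0, pZ' z0 * (if A x0 w0 z0 then NB s0 else 0))
        = NB s0 * ∑' z0, (if A x0 w0 z0 then pZ' z0 else 0) := by
      intro w0
      rw [← ENNReal.tsum_mul_left]
      refine tsum_congr fun z0 => ?_
      split_ifs <;> simp [mul_comm]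
    simp only [hz]
    rw [hCdef, ← ENNReal.tsum_mul_left]
    refine tsum_congr fun w0 => ?_
    ring
  rw [pΩ]
  simp only [PMF.toOuterMeasure_bind_apply, PMF.toOuterMeasure_map_apply, ← hpW, ← hpZ, ← hpN, hkey]
  calc
    (∑' x0, M.pX0 x0 * ∑' s0, M.pS0 s0 * ∑' w0, pW' w0 *
        ∑' z0, pZ' z0 * (if A x0 w0 z0 then NB s0 else 0))
        = ∑' x0, M.pX0 x0 * ∑' s0, M.pS0 s0 * (NB s0 * C x0) := by
          refine tsum_congr fun x0 => ?_
          congr 1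
          exact tsum_congr fun s0 => by rw [hC]
    _ = ∑' x0, (M.pX0 x0 * C x0) * ∑' s0, M.pS0 s0 * NB s0 := by
          refine tsum_congr fun x0 => ?_
          rw [← ENNReal.tsum_mul_left, ← ENNReal.tsum_mul_left]
          exact tsum_congr fun s0 => by ring
    _ = (∑' x0, M.pX0 x0 * C x0) * ∑' s0, M.pS0 s0 * NB s0 := by
          rw [ENNReal.tsum_mul_right]
    _ = M.PA A * M.PB B := by rw [hPA, hPB]

/-- Key structural lemma: the event `{H_t = h}` splits into an `(X₀,W,Z)`-event and an
`(S₀,N)`-event, and on it `X_t`, `S_t` are functions of `(X₀, W)` resp. `(S₀, N)`. -/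
lemma history_split (g : Strat 𝒴 𝒰) :
    ∀ (t : ℕ) (h : Hist 𝒴 𝒰 t),
      ∃ (a : 𝒳 → (Fin (M.T + 1) → 𝒲) → (Fin (M.T + 1) → 𝒵) → Prop)
        (b : 𝒮 → (Fin (M.T + 1) → 𝒩) → Prop)
        (ξ : 𝒳 → (Fin (M.T + 1) → 𝒲) → 𝒳)
        (σ : 𝒮 → (Fin (M.T + 1) → 𝒩) → 𝒮),
        (∀ ω : M.Ω, M.H g ω t = h ↔ a ω.1 ω.2.2.1 ω.2.2.2.1 ∧ b ω.2.1 ω.2.2.2.2) ∧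
        (∀ ω : M.Ω, M.H g ω t = h →
          M.X g ω t = ξ ω.1 ω.2.2.1 ∧ M.S g ω t = σ ω.2.1 ω.2.2.2.2) := by
  intro t
  induction t with
  | zero =>
      intro h
      refine ⟨fun x0 _ z => ((fun _ => M.o x0 (vget z 0)), Fin.elim0, Fin.elim0) = h,
        fun _ _ => True, fun x0 _ => x0, fun s0 _ => s0, ?_, ?_⟩
      · intro ω
        exact ⟨fun hh => ⟨hh, trivial⟩, fun hh => hh.1⟩
      · intro ω _
        exact ⟨rfl, rfl⟩
  | succ t IH =>
      intro h'
      obtain ⟨a, b, ξ, σ, hiff, hval⟩ := IH (Hist.prefix h')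
      set uai' := g t (Hist.prefix h') with huai'
      set uh' := h'.2.1 (Fin.last t) with huh'
      set y' := h'.1 (Fin.last (t + 1)) with hy'
      have hrw : ∀ ω : M.Ω, M.H g ω (t + 1) =
          Hist.ext (M.H g ω t)
            (M.o (M.f (M.X g ω t) (M.gh (M.S g ω t) (g t (M.H g ω t))) (vget ω.2.2.1 t))
              (vget ω.2.2.2.1 (t + 1)))
            (M.gh (M.S g ω t) (g t (M.H g ω t))) (g t (M.H g ω t)) := fun ω => rfl
      refine ⟨fun x0 w z =>
          a x0 w z ∧ M.o (M.f (ξ x0 w) uh' (vget w t)) (vget z (t + 1)) = y',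
        fun s0 n => b s0 n ∧ M.gh (σ s0 n) uai' = uh' ∧ h'.2.2 (Fin.last t) = uai',
        fun x0 w => M.f (ξ x0 w) uh' (vget w t),
        fun s0 n => M.fh (σ s0 n) uai' y' (vget n t), ?_, ?_⟩
      · intro ω
        constructor
        · intro hEq
          rw [hrw ω, Hist.ext_eq_iff] at hEq
          obtain ⟨hp, hy, huh, huai⟩ := hEq
          obtain ⟨ha, hb⟩ := (hiff ω).1 hp
          obtain ⟨hX, hS⟩ := hval ω hp
          have huai2 : g t (M.H g ω t) = uai' := by rw [hp]
          refine ⟨⟨ha, ?_⟩, hb, ?_, ?_⟩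
          · rw [hX, huh] at hy
            exact hy
          · rw [hS, huai2] at huh
            exact huh
          · rw [← huai]
            exact huai2
        · rintro ⟨⟨ha, hy⟩, hb, hgh, huaih⟩
          have hp : M.H g ω t = Hist.prefix h' := (hiff ω).2 ⟨ha, hb⟩
          obtain ⟨hX, hS⟩ := hval ω hp
          have huai2 : g t (M.H g ω t) = uai' := by rw [hp]
          rw [hrw ω, Hist.ext_eq_iff]
          refine ⟨hp, ?_, ?_, ?_⟩
          · rw [hX, hS, huai2, hgh]
            exact hy
          · rw [hS, huai2]
            exact hgh
          · rw [huai2]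
            exact huaih.symm
      · intro ω hEq
        rw [hrw ω, Hist.ext_eq_iff] at hEq
        obtain ⟨hp, hy, huh, huai⟩ := hEq
        obtain ⟨hX, hS⟩ := hval ω hp
        have huai2 : g t (M.H g ω t) = uai' := by rw [hp]
        constructor
        · have hX1 : M.X g ω (t + 1)
              = M.f (M.X g ω t) (M.gh (M.S g ω t) (g t (M.H g ω t))) (vget ω.2.2.1 t) := rfl
          rw [hX1, huh, hX]
        · have hS1 : M.S g ω (t + 1)
              = M.fh (M.S g ω t) (g t (M.H g ω t))
                  (M.o (M.f (M.X g ω t) (M.gh (M.S g ω t) (g t (M.H g ω t)))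
                    (vget ω.2.2.1 t)) (vget ω.2.2.2.1 (t + 1))) (vget ω.2.2.2.2 t) := rfl
          rw [hS1, hy, hS, huai2]

end System

end Aux

/-- conditional independence of the internal state and the system state
given the history. -/
theorem statement_1 {𝒳 𝒮 𝒴 𝒰 𝒲 𝒵 𝒩 : Type}
    [Fintype 𝒳] [Fintype 𝒮] [Fintype 𝒴] [Fintype 𝒰] [Fintype 𝒲] [Fintype 𝒵] [Fintype 𝒩]
    [Nonempty 𝒳] [Nonempty 𝒮] [Nonempty 𝒴] [Nonempty 𝒰] [DecidableEq 𝒰]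
    (M : System 𝒳 𝒮 𝒴 𝒰 𝒲 𝒵 𝒩) (g : Strat 𝒴 𝒰)
    (t : ℕ) (ht : t ≤ M.T) (h : Hist 𝒴 𝒰 t)
    (hpos : 0 < M.pr {ω | M.H g ω t = h}) (s : 𝒮) (x : 𝒳) :
    M.cpr {ω | M.S g ω t = s ∧ M.X g ω t = x} {ω | M.H g ω t = h}
      = M.bS g h s * M.bX g h x := by
  classical
  obtain ⟨a, b, ξ, σ, hiff, hval⟩ := M.history_split g t h
  set a2 : 𝒳 → (Fin (M.T + 1) → 𝒲) → (Fin (M.T + 1) → 𝒵) → Prop :=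
    fun x0 w z => a x0 w z ∧ ξ x0 w = x with ha2
  set b2 : 𝒮 → (Fin (M.T + 1) → 𝒩) → Prop :=
    fun s0 n => b s0 n ∧ σ s0 n = s with hb2
  have e0 : {ω | M.H g ω t = h}
      = {ω : M.Ω | a ω.1 ω.2.2.1 ω.2.2.2.1 ∧ b ω.2.1 ω.2.2.2.2} := Set.ext fun ω => hiff ω
  have e1 : {ω | M.S g ω t = s ∧ M.X g ω t = x} ∩ {ω | M.H g ω t = h}
      = {ω : M.Ω | a2 ω.1 ω.2.2.1 ω.2.2.2.1 ∧ b2 ω.2.1 ω.2.2.2.2} := by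
    ext ω
    constructor
    · rintro ⟨⟨hs, hx⟩, hh⟩
      obtain ⟨ha, hb⟩ := (hiff ω).1 hh
      obtain ⟨hX, hS⟩ := hval ω hh
      exact ⟨⟨ha, hX.symm.trans hx⟩, hb, hS.symm.trans hs⟩
    · rintro ⟨⟨ha, hxx⟩, hb, hss⟩
      have hh := (hiff ω).2 ⟨ha, hb⟩
      obtain ⟨hX, hS⟩ := hval ω hh
      exact ⟨⟨hS.trans hss, hX.trans hxx⟩, hh⟩
  have e2 : {ω | M.S g ω t = s} ∩ {ω | M.H g ω t = h}
      = {ω : M.Ω | a ω.1 ω.2.2.1 ω.2.2.2.1 ∧ b2 ω.2.1 ω.2.2.2.2} := by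
    ext ω
    constructor
    · rintro ⟨hs, hh⟩
      obtain ⟨ha, hb⟩ := (hiff ω).1 hh
      obtain ⟨hX, hS⟩ := hval ω hh
      exact ⟨ha, hb, hS.symm.trans hs⟩
    · rintro ⟨ha, hb, hss⟩
      have hh := (hiff ω).2 ⟨ha, hb⟩
      obtain ⟨hX, hS⟩ := hval ω hh
      exact ⟨hS.trans hss, hh⟩
  have e3 : {ω | M.X g ω t = x} ∩ {ω | M.H g ω t = h}
      = {ω : M.Ω | a2 ω.1 ω.2.2.1 ω.2.2.2.1 ∧ b ω.2.1 ω.2.2.2.2} := by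
    ext ω
    constructor
    · rintro ⟨hx, hh⟩
      obtain ⟨ha, hb⟩ := (hiff ω).1 hh
      obtain ⟨hX, hS⟩ := hval ω hh
      exact ⟨⟨ha, hX.symm.trans hx⟩, hb⟩
    · rintro ⟨⟨ha, hxx⟩, hb⟩
      have hh := (hiff ω).2 ⟨ha, hb⟩
      obtain ⟨hX, hS⟩ := hval ω hh
      exact ⟨hX.trans hxx, hh⟩
  have v0 : M.pr {ω | M.H g ω t = h} = (M.PA a).toReal * (M.PB b).toReal := by
    rw [System.pr, e0, M.pr_fact a b, ENNReal.toReal_mul]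
  have v1 : M.pr ({ω | M.S g ω t = s ∧ M.X g ω t = x} ∩ {ω | M.H g ω t = h})
      = (M.PA a2).toReal * (M.PB b2).toReal := by
    rw [System.pr, e1, M.pr_fact a2 b2, ENNReal.toReal_mul]
  have v2 : M.pr ({ω | M.S g ω t = s} ∩ {ω | M.H g ω t = h})
      = (M.PA a).toReal * (M.PB b2).toReal := by
    rw [System.pr, e2, M.pr_fact a b2, ENNReal.toReal_mul]
  have v3 : M.pr ({ω | M.X g ω t = x} ∩ {ω | M.H g ω t = h})
      = (M.PA a2).toReal * (M.PB b).toReal := by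
    rw [System.pr, e3, M.pr_fact a2 b, ENNReal.toReal_mul]
  rw [v0] at hpos
  have hpa : 0 < (M.PA a).toReal ∧ 0 < (M.PB b).toReal := by
    rcases mul_pos_iff.1 hpos with hp | hp
    · exact hp
    · exact absurd hp.1 (not_lt.2 ENNReal.toReal_nonneg)
  rw [System.cpr, System.bS, System.bX, System.cpr, System.cpr, v0, v1, v2, v3]
  have h1 : (M.PA a).toReal ≠ 0 := ne_of_gt hpa.1
  have h2 : (M.PB b).toReal ≠ 0 := ne_of_gt hpa.2
  field_simp

end CPHS
end
end

section
/- Under the trajectory distribution induced by any recommendation strategy g^ai, for every time t ≤ T, every history realization h_t of positive probability, and every recommendation value u^ai ∈ 𝒰, the conditional expected reward depends on h_t only through the pair of beliefs π_t = (b_t^s, b_t^x): E[r(X_t, g^h(S_t, u^ai)) | H_t = h_t] = Σ_{x ∈ 𝒳} Σ_{s ∈ 𝒮} r(x, g^h(s, u^ai)) · b_t^x(x) · b_t^s(s). -/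
open scoped ENNReal

noncomputable section

namespace CPHS

variable {𝒳 𝒮 𝒴 𝒰 𝒲 𝒵 𝒩 : Type}

section Aux

-- ===== AUX =====

/-- Prefix of a history. -/
def hpref {t : ℕ} (h : Hist 𝒴 𝒰 (t + 1)) : Hist 𝒴 𝒰 t :=
  (Fin.init h.1, Fin.init h.2.1, Fin.init h.2.2)

lemma hpref_ext {t : ℕ} (h : Hist 𝒴 𝒰 t) (y : 𝒴) (uh uai : 𝒰) :
    hpref (h.ext y uh uai) = h := by
  simp [hpref, Hist.ext, Fin.init_snoc]
  rfl

lemma hist_eta {t : ℕ} (h : Hist 𝒴 𝒰 (t + 1)) :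
    (hpref h).ext (h.1 (Fin.last (t + 1))) (h.2.1 (Fin.last t)) (h.2.2 (Fin.last t)) = h := by
  simp [hpref, Hist.ext, Fin.snoc_init_self]
  rfl

lemma ext_last1 {t : ℕ} (h : Hist 𝒴 𝒰 t) (y : 𝒴) (uh uai : 𝒰) :
    (h.ext y uh uai).1 (Fin.last (t + 1)) = y := by simp [Hist.ext]

lemma ext_last21 {t : ℕ} (h : Hist 𝒴 𝒰 t) (y : 𝒴) (uh uai : 𝒰) :
    (h.ext y uh uai).2.1 (Fin.last t) = uh := by simp [Hist.ext]

lemma ext_last22 {t : ℕ} (h : Hist 𝒴 𝒰 t) (y : 𝒴) (uh uai : 𝒰) :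
    (h.ext y uh uai).2.2 (Fin.last t) = uai := by simp [Hist.ext]

variable (M : System 𝒳 𝒮 𝒴 𝒰 𝒲 𝒵 𝒩) (g : Strat 𝒴 𝒰)

/-- Simulated system state from the actions recorded in a history. -/
def simX : (t : ℕ) → Hist 𝒴 𝒰 t → 𝒳 → (Fin (M.T + 1) → 𝒲) → 𝒳
  | 0, _, x0, _ => x0
  | t + 1, h, x0, w => M.f (simX t (hpref h) x0 w) (h.2.1 (Fin.last t)) (vget w t)

/-- Simulated internal state from the observations recorded in a history. -/
def simS : (t : ℕ) → Hist 𝒴 𝒰 t → 𝒮 → (Fin (M.T + 1) → 𝒩) → 𝒮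
  | 0, _, s0, _ => s0
  | t + 1, h, s0, n =>
      M.fh (simS t (hpref h) s0 n) (g t (hpref h)) (h.1 (Fin.last (t + 1))) (vget n t)

/-- System-side consistency with a history. -/
def Csys : (t : ℕ) → Hist 𝒴 𝒰 t → 𝒳 → (Fin (M.T + 1) → 𝒲) → (Fin (M.T + 1) → 𝒵) → Prop
  | 0, h, x0, _, z => M.o x0 (vget z 0) = h.1 0
  | t + 1, h, x0, w, z =>
      Csys t (hpref h) x0 w z ∧
        M.o (simX M (t + 1) h x0 w) (vget z (t + 1)) = h.1 (Fin.last (t + 1))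

/-- Human-side consistency with a history. -/
def Chum : (t : ℕ) → Hist 𝒴 𝒰 t → 𝒮 → (Fin (M.T + 1) → 𝒩) → Prop
  | 0, _, _, _ => True
  | t + 1, h, s0, n =>
      Chum t (hpref h) s0 n ∧
        M.gh (simS M g t (hpref h) s0 n) (g t (hpref h)) = h.2.1 (Fin.last t) ∧
        g t (hpref h) = h.2.2 (Fin.last t)

lemma traj_of_hist : ∀ (t : ℕ) (ω : M.Ω) (h : Hist 𝒴 𝒰 t), M.H g ω t = h →
    M.X g ω t = simX M t h ω.1 ω.2.2.1 ∧ M.S g ω t = simS M g t h ω.2.1 ω.2.2.2.2 := by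
  intro t
  induction t with
  | zero => intro ω h _; exact ⟨rfl, rfl⟩
  | succ t ih =>
      intro ω h hH
      have hH' : Hist.ext (M.H g ω t) (M.o (M.f (M.X g ω t) (M.gh (M.S g ω t) (g t (M.H g ω t)))
          (vget ω.2.2.1 t)) (vget ω.2.2.2.1 (t + 1))) (M.gh (M.S g ω t) (g t (M.H g ω t)))
          (g t (M.H g ω t)) = h := hH
      have hpr : M.H g ω t = hpref h := by rw [← hH', hpref_ext]
      have hy : M.o (M.f (M.X g ω t) (M.gh (M.S g ω t) (g t (M.H g ω t))) (vget ω.2.2.1 t))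
          (vget ω.2.2.2.1 (t + 1)) = h.1 (Fin.last (t + 1)) := by
        rw [← hH', ext_last1]
      have huh : M.gh (M.S g ω t) (g t (M.H g ω t)) = h.2.1 (Fin.last t) := by
        rw [← hH', ext_last21]
      have huai : g t (M.H g ω t) = h.2.2 (Fin.last t) := by rw [← hH', ext_last22]
      obtain ⟨hx, hs⟩ := ih ω (hpref h) hpr
      constructor
      · show M.f (M.X g ω t) (M.gh (M.S g ω t) (g t (M.H g ω t))) (vget ω.2.2.1 t) = _
        rw [huh, hx]; simp only [simX]
      · show M.fh (M.S g ω t) (g t (M.H g ω t)) (M.o (M.f (M.X g ω t)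
            (M.gh (M.S g ω t) (g t (M.H g ω t))) (vget ω.2.2.1 t)) (vget ω.2.2.2.1 (t + 1)))
            (vget ω.2.2.2.2 t) = _
        rw [hy, hs, hpr]; simp only [simS]

lemma hist_iff : ∀ (t : ℕ) (ω : M.Ω) (h : Hist 𝒴 𝒰 t), M.H g ω t = h ↔
    Csys M t h ω.1 ω.2.2.1 ω.2.2.2.1 ∧ Chum M g t h ω.2.1 ω.2.2.2.2 := by
  intro t
  induction t with
  | zero =>
      intro ω h
      constructor
      · intro hH; exact ⟨by rw [← hH]; rfl, trivial⟩
      · rintro ⟨h1, -⟩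
        show ((fun _ => M.o ω.1 (vget ω.2.2.2.1 0), Fin.elim0, Fin.elim0) : Hist 𝒴 𝒰 0) = h
        have e1 : (fun _ => M.o ω.1 (vget ω.2.2.2.1 0) : Fin 1 → 𝒴) = h.1 := by
          funext i
          have : i = 0 := Subsingleton.elim _ _
          rw [this]; exact h1
        refine Prod.ext e1 (Prod.ext ?_ ?_) <;>
          · funext i; exact i.elim0
  | succ t ih =>
      intro ω h
      have hH' : M.H g ω (t + 1) = Hist.ext (M.H g ω t)
          (M.o (M.f (M.X g ω t) (M.gh (M.S g ω t) (g t (M.H g ω t))) (vget ω.2.2.1 t))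
            (vget ω.2.2.2.1 (t + 1)))
          (M.gh (M.S g ω t) (g t (M.H g ω t))) (g t (M.H g ω t)) := rfl
      constructor
      · intro hH
        have hpr : M.H g ω t = hpref h := by rw [← hH, hH', hpref_ext]
        obtain ⟨hx, hs⟩ := traj_of_hist M g t ω (hpref h) hpr
        have hC := (ih ω (hpref h)).mp hpr
        have hy : M.o (M.f (M.X g ω t) (M.gh (M.S g ω t) (g t (M.H g ω t))) (vget ω.2.2.1 t))
            (vget ω.2.2.2.1 (t + 1)) = h.1 (Fin.last (t + 1)) := by
          rw [← hH, hH', ext_last1]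
        have huh : M.gh (M.S g ω t) (g t (M.H g ω t)) = h.2.1 (Fin.last t) := by
          rw [← hH, hH', ext_last21]
        have huai : g t (M.H g ω t) = h.2.2 (Fin.last t) := by rw [← hH, hH', ext_last22]
        refine ⟨⟨hC.1, ?_⟩, hC.2, ?_, ?_⟩
        · simp only [simX]; rw [← hy, hx, huh]
        · rw [← huh, hs, hpr]
        · rw [← huai, hpr]
      · rintro ⟨⟨hC1, hobs⟩, hC2, hgh, hg⟩
        have hpr : M.H g ω t = hpref h := (ih ω (hpref h)).mpr ⟨hC1, hC2⟩
        obtain ⟨hx, hs⟩ := traj_of_hist M g t ω (hpref h) hpr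
        rw [hH', hpr, hx, hs]
        have : M.gh (simS M g t (hpref h) ω.2.1 ω.2.2.2.2) (g t (hpref h)) = h.2.1 (Fin.last t) := hgh
        rw [this, hg]
        have hx' : M.f (simX M t (hpref h) ω.1 ω.2.2.1) (h.2.1 (Fin.last t)) (vget ω.2.2.1 t)
            = simX M (t + 1) h ω.1 ω.2.2.1 := by simp only [simX]
        rw [hx']
        rw [hobs]
        exact hist_eta h

section Measure

open Classical

variable [Fintype 𝒳] [Fintype 𝒮] [Fintype 𝒴] [Fintype 𝒰]
  [Fintype 𝒲] [Fintype 𝒵] [Fintype 𝒩]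

lemma pOmega_apply (x : 𝒳) (s : 𝒮) (w : Fin (M.T + 1) → 𝒲) (z : Fin (M.T + 1) → 𝒵)
    (n : Fin (M.T + 1) → 𝒩) :
    M.pΩ (x, s, w, z, n) =
      M.pX0 x * (M.pS0 s * (pmfVec M.pW (M.T + 1) w *
        (pmfVec M.pZ (M.T + 1) z * pmfVec M.pN (M.T + 1) n))) := by
  simp only [System.pΩ, PMF.bind_apply, PMF.map_apply, Prod.mk.injEq]
  rw [tsum_eq_single x (fun b hb => by simp [Ne.symm hb])]
  simp only [eq_self_iff_true, true_and]
  rw [tsum_eq_single s (fun b hb => by simp [Ne.symm hb])]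
  simp only [eq_self_iff_true, true_and]
  rw [tsum_eq_single w (fun b hb => by simp [Ne.symm hb])]
  simp only [eq_self_iff_true, true_and]
  rw [tsum_eq_single z (fun b hb => by simp [Ne.symm hb])]
  simp only [eq_self_iff_true, true_and]
  rw [tsum_eq_single n (fun b hb => by simp [Ne.symm hb])]
  simp

lemma pr_eq_sum (A : Set M.Ω) :
    M.pr A = ∑ ω : M.Ω, if ω ∈ A then (M.pΩ ω).toReal else 0 := by
  rw [System.pr, PMF.toOuterMeasure_apply, tsum_fintype, ENNReal.toReal_sum
    (fun a _ => ne_top_of_le_ne_top (M.pΩ.apply_ne_top a) (Set.indicator_le_self _ _ a))]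
  refine Finset.sum_congr rfl fun ω _ => ?_
  by_cases hω : ω ∈ A <;> simp [hω, Set.indicator_apply]

lemma sum_factor (F : 𝒳 → (Fin (M.T + 1) → 𝒲) → (Fin (M.T + 1) → 𝒵) → ℝ)
    (G : 𝒮 → (Fin (M.T + 1) → 𝒩) → ℝ) :
    ∑ ω : M.Ω, F ω.1 ω.2.2.1 ω.2.2.2.1 * G ω.2.1 ω.2.2.2.2 * (M.pΩ ω).toReal =
      (∑ x, ∑ w, ∑ z, F x w z * ((M.pX0 x).toReal * (pmfVec M.pW (M.T + 1) w).toReal *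
        (pmfVec M.pZ (M.T + 1) z).toReal)) *
      (∑ s, ∑ n, G s n * ((M.pS0 s).toReal * (pmfVec M.pN (M.T + 1) n).toReal)) := by
  rw [Finset.sum_mul_sum]
  simp only [Fintype.sum_prod_type, Finset.sum_mul, Finset.mul_sum]
  refine Finset.sum_congr rfl fun x _ => Finset.sum_congr rfl fun s _ => ?_
  conv_rhs => rw [Finset.sum_comm]
  refine Finset.sum_congr rfl fun w _ => ?_
  rw [Finset.sum_comm]
  refine Finset.sum_congr rfl fun z _ => Finset.sum_congr rfl fun n _ => ?_
  rw [pOmega_apply, ENNReal.toReal_mul, ENNReal.toReal_mul, ENNReal.toReal_mul,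
    ENNReal.toReal_mul]
  ring

/-- System-side weight. -/
def wsys (x : 𝒳) (w : Fin (M.T + 1) → 𝒲) (z : Fin (M.T + 1) → 𝒵) : ℝ :=
  (M.pX0 x).toReal * (pmfVec M.pW (M.T + 1) w).toReal * (pmfVec M.pZ (M.T + 1) z).toReal

/-- Human-side weight. -/
def whum (s : 𝒮) (n : Fin (M.T + 1) → 𝒩) : ℝ :=
  (M.pS0 s).toReal * (pmfVec M.pN (M.T + 1) n).toReal

def P1 (t : ℕ) (h : Hist 𝒴 𝒰 t) : ℝ :=
  ∑ x, ∑ w, ∑ z, (if Csys M t h x w z then (1 : ℝ) else 0) * wsys M x w z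

def P1x (t : ℕ) (h : Hist 𝒴 𝒰 t) (xb : 𝒳) : ℝ :=
  ∑ x, ∑ w, ∑ z, (if Csys M t h x w z ∧ simX M t h x w = xb then (1 : ℝ) else 0) * wsys M x w z

def P2 (t : ℕ) (h : Hist 𝒴 𝒰 t) : ℝ :=
  ∑ s, ∑ n, (if Chum M g t h s n then (1 : ℝ) else 0) * whum M s n

def P2s (t : ℕ) (h : Hist 𝒴 𝒰 t) (sb : 𝒮) : ℝ :=
  ∑ s, ∑ n, (if Chum M g t h s n ∧ simS M g t h s n = sb then (1 : ℝ) else 0) * whum M s n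

lemma sum_factor' (F : 𝒳 → (Fin (M.T + 1) → 𝒲) → (Fin (M.T + 1) → 𝒵) → ℝ)
    (G : 𝒮 → (Fin (M.T + 1) → 𝒩) → ℝ) :
    ∑ ω : M.Ω, F ω.1 ω.2.2.1 ω.2.2.2.1 * G ω.2.1 ω.2.2.2.2 * (M.pΩ ω).toReal =
      (∑ x, ∑ w, ∑ z, F x w z * wsys M x w z) * (∑ s, ∑ n, G s n * whum M s n) := by
  rw [sum_factor]
  simp only [wsys, whum, mul_assoc]

lemma pr_hist (t : ℕ) (h : Hist 𝒴 𝒰 t) :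
    M.pr {ω | M.H g ω t = h} = P1 M t h * P2 M g t h := by
  rw [pr_eq_sum, P1, P2, ← sum_factor' M
    (fun x w z => if Csys M t h x w z then (1 : ℝ) else 0)
    (fun s n => if Chum M g t h s n then (1 : ℝ) else 0)]
  refine Finset.sum_congr rfl fun ω _ => ?_
  by_cases hω : M.H g ω t = h
  · obtain ⟨hc1, hc2⟩ := (hist_iff M g t ω h).mp hω
    simp [Set.mem_setOf_eq, hω, hc1, hc2]
  · have hcc : ¬(Csys M t h ω.1 ω.2.2.1 ω.2.2.2.1 ∧ Chum M g t h ω.2.1 ω.2.2.2.2) :=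
      fun c => hω ((hist_iff M g t ω h).mpr c)
    rcases not_and_or.mp hcc with hc | hc <;> simp [Set.mem_setOf_eq, hω, hc]

lemma pr_X_hist (t : ℕ) (h : Hist 𝒴 𝒰 t) (xb : 𝒳) :
    M.pr ({ω | M.X g ω t = xb} ∩ {ω | M.H g ω t = h}) = P1x M t h xb * P2 M g t h := by
  rw [pr_eq_sum, P1x, P2, ← sum_factor' M
    (fun x w z => if Csys M t h x w z ∧ simX M t h x w = xb then (1 : ℝ) else 0)
    (fun s n => if Chum M g t h s n then (1 : ℝ) else 0)]
  refine Finset.sum_congr rfl fun ω _ => ?_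
  by_cases hω : M.H g ω t = h
  · obtain ⟨hc1, hc2⟩ := (hist_iff M g t ω h).mp hω
    obtain ⟨hX, -⟩ := traj_of_hist M g t ω h hω
    by_cases hx : simX M t h ω.1 ω.2.2.1 = xb
    · simp [Set.mem_inter_iff, Set.mem_setOf_eq, hω, hc1, hc2, hx, hX]
    · have : ¬ M.X g ω t = xb := by rw [hX]; exact hx
      simp [Set.mem_inter_iff, Set.mem_setOf_eq, hω, hc1, hc2, hx, this]
  · have hcc : ¬(Csys M t h ω.1 ω.2.2.1 ω.2.2.2.1 ∧ Chum M g t h ω.2.1 ω.2.2.2.2) :=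
      fun c => hω ((hist_iff M g t ω h).mpr c)
    rcases not_and_or.mp hcc with hc | hc <;>
      simp [Set.mem_inter_iff, Set.mem_setOf_eq, hω, hc]
  
lemma pr_S_hist (t : ℕ) (h : Hist 𝒴 𝒰 t) (sb : 𝒮) :
    M.pr ({ω | M.S g ω t = sb} ∩ {ω | M.H g ω t = h}) = P1 M t h * P2s M g t h sb := by
  rw [pr_eq_sum, P1, P2s, ← sum_factor' M
    (fun x w z => if Csys M t h x w z then (1 : ℝ) else 0)
    (fun s n => if Chum M g t h s n ∧ simS M g t h s n = sb then (1 : ℝ) else 0)]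
  refine Finset.sum_congr rfl fun ω _ => ?_
  by_cases hω : M.H g ω t = h
  · obtain ⟨hc1, hc2⟩ := (hist_iff M g t ω h).mp hω
    obtain ⟨-, hS⟩ := traj_of_hist M g t ω h hω
    by_cases hs : simS M g t h ω.2.1 ω.2.2.2.2 = sb
    · simp [Set.mem_inter_iff, Set.mem_setOf_eq, hω, hc1, hc2, hs, hS]
    · have : ¬ M.S g ω t = sb := by rw [hS]; exact hs
      simp [Set.mem_inter_iff, Set.mem_setOf_eq, hω, hc1, hc2, hs, this]
  · have hcc : ¬(Csys M t h ω.1 ω.2.2.1 ω.2.2.2.1 ∧ Chum M g t h ω.2.1 ω.2.2.2.2) :=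
      fun c => hω ((hist_iff M g t ω h).mpr c)
    rcases not_and_or.mp hcc with hc | hc <;>
      simp [Set.mem_inter_iff, Set.mem_setOf_eq, hω, hc]

lemma num_eq (r : 𝒳 → 𝒰 → ℝ) (uai : 𝒰) (t : ℕ) (h : Hist 𝒴 𝒰 t) :
    ∑ ω : M.Ω, Set.indicator {ω | M.H g ω t = h}
        (fun ω => r (M.X g ω t) (M.gh (M.S g ω t) uai)) ω * (M.pΩ ω).toReal =
      ∑ xb, ∑ sb, r xb (M.gh sb uai) * (P1x M t h xb * P2s M g t h sb) := by
  have step1 : ∀ ω : M.Ω,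
      Set.indicator {ω | M.H g ω t = h} (fun ω => r (M.X g ω t) (M.gh (M.S g ω t) uai)) ω
        * (M.pΩ ω).toReal =
      ∑ xb, ∑ sb, r xb (M.gh sb uai) *
        ((if Csys M t h ω.1 ω.2.2.1 ω.2.2.2.1 ∧ simX M t h ω.1 ω.2.2.1 = xb then (1:ℝ) else 0) *
         (if Chum M g t h ω.2.1 ω.2.2.2.2 ∧ simS M g t h ω.2.1 ω.2.2.2.2 = sb then (1:ℝ) else 0) *
         (M.pΩ ω).toReal) := by
    intro ω
    rw [Set.indicator_apply]
    simp only [Set.mem_setOf_eq]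
    by_cases hω : M.H g ω t = h
    · obtain ⟨hc1, hc2⟩ := (hist_iff M g t ω h).mp hω
      obtain ⟨hX, hS⟩ := traj_of_hist M g t ω h hω
      rw [if_pos hω]
      rw [Finset.sum_eq_single (simX M t h ω.1 ω.2.2.1)
        (fun b _ hb => Finset.sum_eq_zero fun sb _ => by
          rw [if_neg (fun c => hb c.2.symm :
            ¬(Csys M t h ω.1 ω.2.2.1 ω.2.2.2.1 ∧ simX M t h ω.1 ω.2.2.1 = b))]; ring)
        (fun hmem => absurd (Finset.mem_univ _) hmem)]
      rw [Finset.sum_eq_single (simS M g t h ω.2.1 ω.2.2.2.2)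
        (fun b _ hb => by rw [if_neg (fun c => hb c.2.symm :
            ¬(Chum M g t h ω.2.1 ω.2.2.2.2 ∧ simS M g t h ω.2.1 ω.2.2.2.2 = b))]; ring)
        (fun hmem => absurd (Finset.mem_univ _) hmem)]
      rw [if_pos ⟨hc1, rfl⟩, if_pos ⟨hc2, rfl⟩, hX, hS]
      ring
    · have hcc : ¬(Csys M t h ω.1 ω.2.2.1 ω.2.2.2.1 ∧ Chum M g t h ω.2.1 ω.2.2.2.2) :=
        fun c => hω ((hist_iff M g t ω h).mpr c)
      rw [if_neg hω, zero_mul]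
      refine (Finset.sum_eq_zero fun xb _ => Finset.sum_eq_zero fun sb _ => ?_).symm
      rcases not_and_or.mp hcc with hc | hc
      · rw [if_neg (fun c => hc c.1 :
          ¬(Csys M t h ω.1 ω.2.2.1 ω.2.2.2.1 ∧ simX M t h ω.1 ω.2.2.1 = xb))]; ring
      · rw [if_neg (fun c => hc c.1 :
          ¬(Chum M g t h ω.2.1 ω.2.2.2.2 ∧ simS M g t h ω.2.1 ω.2.2.2.2 = sb))]; ring
  calc ∑ ω : M.Ω, Set.indicator {ω | M.H g ω t = h}
        (fun ω => r (M.X g ω t) (M.gh (M.S g ω t) uai)) ω * (M.pΩ ω).toReal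
      = ∑ ω : M.Ω, ∑ xb, ∑ sb, r xb (M.gh sb uai) *
        ((if Csys M t h ω.1 ω.2.2.1 ω.2.2.2.1 ∧ simX M t h ω.1 ω.2.2.1 = xb then (1:ℝ) else 0) *
         (if Chum M g t h ω.2.1 ω.2.2.2.2 ∧ simS M g t h ω.2.1 ω.2.2.2.2 = sb then (1:ℝ) else 0) *
         (M.pΩ ω).toReal) := Finset.sum_congr rfl fun ω _ => step1 ω
    _ = ∑ xb, ∑ sb, r xb (M.gh sb uai) * (P1x M t h xb * P2s M g t h sb) := by
        rw [Finset.sum_comm]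
        refine Finset.sum_congr rfl fun xb _ => ?_
        rw [Finset.sum_comm]
        refine Finset.sum_congr rfl fun sb _ => ?_
        rw [← Finset.mul_sum]
        congr 1
        rw [sum_factor' M
          (fun x w z => if Csys M t h x w z ∧ simX M t h x w = xb then (1 : ℝ) else 0)
          (fun s n => if Chum M g t h s n ∧ simS M g t h s n = sb then (1 : ℝ) else 0)]
        rfl

end Measure

end Aux

/-- the conditional expected reward depends on the history only
through the pair of beliefs `(b_t^s, b_t^x)`. -/
theorem statement_5 {𝒳 𝒮 𝒴 𝒰 𝒲 𝒵 𝒩 : Type}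
    [Fintype 𝒳] [Fintype 𝒮] [Fintype 𝒴] [Fintype 𝒰] [Fintype 𝒲] [Fintype 𝒵] [Fintype 𝒩]
    [Nonempty 𝒳] [Nonempty 𝒮] [Nonempty 𝒴] [Nonempty 𝒰] [DecidableEq 𝒰]
    (M : System 𝒳 𝒮 𝒴 𝒰 𝒲 𝒵 𝒩) (g : Strat 𝒴 𝒰) (r : 𝒳 → 𝒰 → ℝ)
    (t : ℕ) (ht : t ≤ M.T) (h : Hist 𝒴 𝒰 t)
    (hpos : 0 < M.pr {ω | M.H g ω t = h}) (uai : 𝒰) :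
    M.cexp {ω | M.H g ω t = h} (fun ω => r (M.X g ω t) (M.gh (M.S g ω t) uai))
      = ∑ x, ∑ s, r x (M.gh s uai) * M.bX g h x * M.bS g h s := by
  have hB := pr_hist M g t h
  have hpos' : 0 < P1 M t h * P2 M g t h := hB ▸ hpos
  have hP1 : P1 M t h ≠ 0 := by
    intro e; rw [e, zero_mul] at hpos'; exact lt_irrefl 0 hpos'
  have hP2 : P2 M g t h ≠ 0 := by
    intro e; rw [e, mul_zero] at hpos'; exact lt_irrefl 0 hpos'
  have hbX : ∀ xb, M.bX g h xb =
      P1x M t h xb * P2 M g t h / (P1 M t h * P2 M g t h) := fun xb => by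
    rw [System.bX, System.cpr, pr_X_hist, pr_hist]
  have hbS : ∀ sb, M.bS g h sb =
      P1 M t h * P2s M g t h sb / (P1 M t h * P2 M g t h) := fun sb => by
    rw [System.bS, System.cpr, pr_S_hist, pr_hist]
  rw [System.cexp, num_eq M g r uai t h, hB]
  simp only [hbX, hbS]
  rw [Finset.sum_div]
  refine Finset.sum_congr rfl fun xb _ => ?_
  rw [Finset.sum_div]
  refine Finset.sum_congr rfl fun sb _ => ?_
  field_simp

end CPHS
end
end
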